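/- Let d = 2. Fix x ∈ D and z ∈ Δ^2 such that there exist x̃^1, x̃^2 with x̃^k ∈ z_k·D_{|k} for k = 1, 2 and x = x̃^1 + x̃^2. Then the maximum of Σ_{k=1}^2 (w^k · x̃^k + b^k z_k) over all pairs (x̃^1, x̃^2) with x̃^k ∈ z_k·D_{|k} for k = 1, 2 and x = x̃^1 + x̃^2 equals the maximum of the same objective over the larger feasible set of pairs (x̃^1, x̃^2) with x̃^k ∈ z_k·D for k = 1, 2 and x = x̃^1 + x̃^2. -/

import Mathlib

open scoped Pointwise

noncomputable section

/-- Dot product on `Fin n → ℝ`. -/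
def dotp {n : ℕ} (w x : Fin n → ℝ) : ℝ := ∑ i, w i * x i

/-- The affine function `f^k(x) = w^k ⬝ x + b^k`. -/
def affK {η d : ℕ} (w : Fin d → Fin η → ℝ) (b : Fin d → ℝ) (k : Fin d) (x : Fin η → ℝ) : ℝ :=
  dotp (w k) x + b k

/-- `D_{|k}`: the part of the domain where `f^k` attains the maximum. -/
def DrestrK {η d : ℕ} (D : Set (Fin η → ℝ)) (w : Fin d → Fin η → ℝ) (b : Fin d → ℝ)
    (k : Fin d) : Set (Fin η → ℝ) :=
  {x ∈ D | ∀ ℓ, affK w b ℓ x ≤ affK w b k x}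

lemma dotp_continuous {n : ℕ} (w : Fin n → ℝ) : Continuous (dotp w) := by
  unfold dotp
  exact continuous_finset_sum _ fun i _ => continuous_const.mul (continuous_apply i)

lemma dotp_add' {n : ℕ} (w a c : Fin n → ℝ) : dotp w (a + c) = dotp w a + dotp w c := by
  unfold dotp
  rw [← Finset.sum_add_distrib]
  exact Finset.sum_congr rfl fun i _ => by simp [mul_add]

lemma affK_continuous {n d : ℕ} (w : Fin d → Fin n → ℝ) (b : Fin d → ℝ) (k : Fin d) :
    Continuous (affK w b k) := by
  unfold affK
  exact (dotp_continuous _).add continuous_const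

lemma dotp_smul' {n : ℕ} (w : Fin n → ℝ) (t : ℝ) (y : Fin n → ℝ) :
    dotp w (t • y) = t * dotp w y := by
  unfold dotp
  rw [Finset.mul_sum]
  exact Finset.sum_congr rfl fun i _ => by simp [Pi.smul_apply]; ring

theorem stmt6 {η : ℕ} (hη : 1 ≤ η)
    (w : Fin 2 → Fin η → ℝ) (b : Fin 2 → ℝ)
    (D : Set (Fin η → ℝ))
    (hDpoly : ∃ (m : ℕ) (A : Fin m → Fin η → ℝ) (c : Fin m → ℝ),
      D = {x | ∀ i, dotp (A i) x ≤ c i})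
    (hDne : D.Nonempty) (hDbd : Bornology.IsBounded D)
    (hirr : ∀ k, ∃ x ∈ D, ∀ ℓ, ℓ ≠ k → affK w b ℓ x < affK w b k x)
    (x : Fin η → ℝ) (hx : x ∈ D)
    (z : Fin 2 → ℝ) (hz : z ∈ stdSimplex ℝ (Fin 2))
    (hfeas : ∃ xt : Fin 2 → Fin η → ℝ,
      (∀ k, xt k ∈ z k • DrestrK D w b k) ∧ x = ∑ k, xt k) :
    ∃ m : ℝ,
      IsGreatest
        {s : ℝ | ∃ xt : Fin 2 → Fin η → ℝ,
          (∀ k, xt k ∈ z k • DrestrK D w b k) ∧ x = ∑ k, xt k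
          ∧ s = ∑ k, (dotp (w k) (xt k) + b k * z k)} m
      ∧ IsGreatest
          {s : ℝ | ∃ xt : Fin 2 → Fin η → ℝ,
            (∀ k, xt k ∈ z k • D) ∧ x = ∑ k, xt k
            ∧ s = ∑ k, (dotp (w k) (xt k) + b k * z k)} m := by
  have hznn : ∀ k, 0 ≤ z k := hz.1
  have hz01 : z 0 + z 1 = 1 := by
    have := hz.2; rwa [Fin.sum_univ_two] at this
  -- D is closed
  have hDclosed : IsClosed D := by
    obtain ⟨M, A, c, rfl⟩ := hDpoly
    have h : {x : Fin η → ℝ | ∀ i, dotp (A i) x ≤ c i}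
        = ⋂ i, {x | dotp (A i) x ≤ c i} := by ext y; simp
    rw [h]
    exact isClosed_iInter fun i => isClosed_le (dotp_continuous _) continuous_const
  -- each restricted region is compact
  have hKcomp : ∀ k : Fin 2, IsCompact (DrestrK D w b k) := by
    intro k
    have hcl : IsClosed (DrestrK D w b k) := by
      have h : DrestrK D w b k = D ∩ ⋂ ℓ, {y | affK w b ℓ y ≤ affK w b k y} := by
        ext y; simp [DrestrK]; tauto
      rw [h]
      exact hDclosed.inter (isClosed_iInter fun ℓ =>
        isClosed_le (affK_continuous w b ℓ) (affK_continuous w b k))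
    exact Metric.isCompact_of_isClosed_isBounded hcl (hDbd.subset fun y hy => hy.1)
  have hzKcomp : ∀ k : Fin 2, IsCompact (z k • DrestrK D w b k) := fun k =>
    (hKcomp k).smul (z k)
  -- feasible set
  set F : Set (Fin 2 → Fin η → ℝ) :=
    {xt | (∀ k, xt k ∈ z k • DrestrK D w b k) ∧ x = ∑ k, xt k} with hF
  have hFcomp : IsCompact F := by
    have h1 : IsCompact {xt : Fin 2 → Fin η → ℝ | ∀ k, xt k ∈ z k • DrestrK D w b k} := by
      have h := isCompact_univ_pi hzKcomp
      have he : {xt : Fin 2 → Fin η → ℝ | ∀ k, xt k ∈ z k • DrestrK D w b k}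
          = Set.pi Set.univ (fun k => z k • DrestrK D w b k) := by
        ext xt; simp [Set.mem_pi]
      rwa [he]
    have h2 : IsClosed {xt : Fin 2 → Fin η → ℝ | x = ∑ k, xt k} :=
      isClosed_eq continuous_const (continuous_finset_sum _ fun k _ => continuous_apply k)
    exact h1.inter_right h2
  set φ : (Fin 2 → Fin η → ℝ) → ℝ := fun xt => ∑ k, (dotp (w k) (xt k) + b k * z k) with hφ
  have hφcont : Continuous φ :=
    continuous_finset_sum _ fun k _ =>
      ((dotp_continuous (w k)).comp (continuous_apply k)).add continuous_const
  obtain ⟨xh, hxh, hxhsum⟩ := hfeas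
  have hFne : F.Nonempty := ⟨xh, hxh, hxhsum⟩
  have himg : {s : ℝ | ∃ xt : Fin 2 → Fin η → ℝ,
      (∀ k, xt k ∈ z k • DrestrK D w b k) ∧ x = ∑ k, xt k
      ∧ s = ∑ k, (dotp (w k) (xt k) + b k * z k)} = φ '' F := by
    ext s
    constructor
    · rintro ⟨xt, h1, h2, h3⟩; exact ⟨xt, ⟨h1, h2⟩, h3.symm⟩
    · rintro ⟨xt, ⟨h1, h2⟩, h3⟩; exact ⟨xt, h1, h2, h3.symm⟩
  obtain ⟨m, hm⟩ := (hFcomp.image hφcont).exists_isGreatest (hFne.image φ)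
  refine ⟨m, by rw [himg]; exact hm, ?_⟩
  -- identities
  have hid2 : ∀ xt : Fin 2 → Fin η → ℝ, x = ∑ k, xt k →
      φ xt = (dotp (w 1) x + b 1)
        + (dotp (w 0) (xt 0) - dotp (w 1) (xt 0) + (b 0 - b 1) * z 0) := by
    intro xt hsum
    have hx' : dotp (w 1) x = dotp (w 1) (xt 0) + dotp (w 1) (xt 1) := by
      rw [hsum, Fin.sum_univ_two, dotp_add']
    simp only [hφ, Fin.sum_univ_two]
    linear_combination (-1 : ℝ) * hx' + b 1 * hz01
  have hid1 : ∀ xt : Fin 2 → Fin η → ℝ, x = ∑ k, xt k →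
      φ xt = (dotp (w 0) x + b 0)
        + (dotp (w 1) (xt 1) - dotp (w 0) (xt 1) + (b 1 - b 0) * z 1) := by
    intro xt hsum
    have hx' : dotp (w 0) x = dotp (w 0) (xt 0) + dotp (w 0) (xt 1) := by
      rw [hsum, Fin.sum_univ_two, dotp_add']
    simp only [hφ, Fin.sum_univ_two]
    linear_combination (-1 : ℝ) * hx' + b 0 * hz01
  -- sign facts for restricted points
  have hsign : ∀ xt : Fin 2 → Fin η → ℝ, (∀ k, xt k ∈ z k • DrestrK D w b k) →
      0 ≤ dotp (w 0) (xt 0) - dotp (w 1) (xt 0) + (b 0 - b 1) * z 0 ∧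
      0 ≤ dotp (w 1) (xt 1) - dotp (w 0) (xt 1) + (b 1 - b 0) * z 1 := by
    intro xt hxt
    constructor
    · obtain ⟨y, hy, hye⟩ := Set.mem_smul_set.mp (hxt 0)
      have hg : affK w b 1 y ≤ affK w b 0 y := hy.2 1
      simp only [affK] at hg
      rw [← hye, dotp_smul', dotp_smul']
      nlinarith [hznn 0]
    · obtain ⟨y, hy, hye⟩ := Set.mem_smul_set.mp (hxt 1)
      have hg : affK w b 0 y ≤ affK w b 1 y := hy.2 0
      simp only [affK] at hg
      rw [← hye, dotp_smul', dotp_smul']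
      nlinarith [hznn 1]
  have hhat_mem : φ xh ∈ φ '' F := ⟨xh, ⟨hxh, hxhsum⟩, rfl⟩
  have hhat_le : φ xh ≤ m := hm.2 hhat_mem
  have hhat2 : dotp (w 1) x + b 1 ≤ φ xh := by
    have := (hsign xh hxh).1
    rw [hid2 xh hxhsum]; linarith
  have hhat1 : dotp (w 0) x + b 0 ≤ φ xh := by
    have := (hsign xh hxh).2
    rw [hid1 xh hxhsum]; linarith
  constructor
  · -- m belongs to relaxed set
    obtain ⟨xt, ⟨h1, h2⟩, h3⟩ := hm.1
    exact ⟨xt, fun k => Set.smul_set_mono (fun y hy => hy.1) (h1 k), h2, h3.symm⟩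
  · -- m is an upper bound for the relaxed set
    rintro s ⟨xt, hxt, hsum, rfl⟩
    have hsφ : (∑ k, (dotp (w k) (xt k) + b k * z k)) = φ xt := rfl
    rw [hsφ]
    by_cases h0 : dotp (w 0) (xt 0) - dotp (w 1) (xt 0) + (b 0 - b 1) * z 0 ≤ 0
    · -- objective ≤ f²(x) ≤ φ xh ≤ m
      have := hid2 xt hsum
      have : φ xt ≤ dotp (w 1) x + b 1 := by rw [hid2 xt hsum]; linarith
      linarith
    · by_cases h1 : dotp (w 1) (xt 1) - dotp (w 0) (xt 1) + (b 1 - b 0) * z 1 ≤ 0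
      · have : φ xt ≤ dotp (w 0) x + b 0 := by rw [hid1 xt hsum]; linarith
        linarith
      · push_neg at h0 h1
        -- both coordinates are in the "right" region: xt is restricted-feasible
        have hmem : ∀ k, xt k ∈ z k • DrestrK D w b k := by
          intro k
          fin_cases k
          · obtain ⟨y, hy, hye⟩ := Set.mem_smul_set.mp (hxt 0)
            have hG : 0 < z 0 * (dotp (w 0) y - dotp (w 1) y + (b 0 - b 1)) := by
              rw [← hye, dotp_smul', dotp_smul'] at h0; nlinarith
            have hzpos : 0 < z 0 := by
              rcases lt_or_eq_of_le (hznn 0) with h | h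
              · exact h
              · exfalso; rw [← h] at hG; simp at hG
            have hgy : 0 ≤ dotp (w 0) y - dotp (w 1) y + (b 0 - b 1) := by
              nlinarith
            have hyK : y ∈ DrestrK D w b 0 := by
              refine ⟨hy, fun ℓ => ?_⟩
              fin_cases ℓ
              · exact le_refl _
              · show affK w b 1 y ≤ affK w b 0 y
                simp only [affK]; linarith
            have : z 0 • y ∈ z 0 • DrestrK D w b 0 := Set.smul_mem_smul_set hyK
            rw [hye] at this
            exact this
          · obtain ⟨y, hy, hye⟩ := Set.mem_smul_set.mp (hxt 1)
            have hG : 0 < z 1 * (dotp (w 1) y - dotp (w 0) y + (b 1 - b 0)) := by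
              rw [← hye, dotp_smul', dotp_smul'] at h1; nlinarith
            have hzpos : 0 < z 1 := by
              rcases lt_or_eq_of_le (hznn 1) with h | h
              · exact h
              · exfalso; rw [← h] at hG; simp at hG
            have hgy : 0 ≤ dotp (w 1) y - dotp (w 0) y + (b 1 - b 0) := by
              nlinarith
            have hyK : y ∈ DrestrK D w b 1 := by
              refine ⟨hy, fun ℓ => ?_⟩
              fin_cases ℓ
              · show affK w b 0 y ≤ affK w b 1 y
                simp only [affK]; linarith
              · exact le_refl _
            have : z 1 • y ∈ z 1 • DrestrK D w b 1 := Set.smul_mem_smul_set hyK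
            rw [hye] at this
            exact this
        have : φ xt ∈ φ '' F := ⟨xt, ⟨hmem, hsum⟩, rfl⟩
        exact hm.2 this
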